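/- A binary cube-free word is non-uniform if and only if it contains at least one of the factors aabaa, aababaa, bbabb, bbababb. -/
import Mathlib


/-- `w` has period `p`: `w[i] = w[i+p]` whenever both positions exist. -/
def HasPeriod {α : Type*} (w : List α) (p : ℕ) : Prop :=
  ∀ i, (h : i + p < w.length) → w.get ⟨i, by omega⟩ = w.get ⟨i + p, h⟩

/-- A finite word is cube-free if it has no nonempty factor of the form `x ++ x ++ x`. -/
def Cubefree {α : Type*} (w : List α) : Prop :=
  ∀ x : List α, x ≠ [] → ¬ (x ++ x ++ x) <:+: w

/-- `x` is a factor of the infinite word `w`. -/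
def FactorOfInf {α : Type*} (x : List α) (w : ℕ → α) : Prop :=
  ∃ i, x = (List.range x.length).map fun k => w (i + k)

/-- An infinite word is cube-free if all its finite factors are cube free. -/
def CubefreeInf {α : Type*} (w : ℕ → α) : Prop :=
  ∀ x : List α, x ≠ [] → ¬ FactorOfInf (x ++ x ++ x) w

/-- Concatenation of a finite word and an infinite word. -/
def catInf {α : Type*} (u : List α) (w : ℕ → α) : ℕ → α :=
  fun k => if h : k < u.length then u.get ⟨k, h⟩ else w (k - u.length)

/-- The Thue–Morse morphism over `Bool` (`false` = a, `true` = b): `c ↦ c (¬c)`. -/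
def theta (w : List Bool) : List Bool := w.flatMap fun c => [c, !c]

/-- The Thue–Morse word over `Bool` (`false` = a, `true` = b), 0-indexed. -/
def tm : ℕ → Bool := fun n => (Nat.digits 2 n).sum % 2 == 1

/-- A binary word is uniform if it is `c ++ θ(u) ++ d` with `c, d` empty or a single letter. -/
def Uniform (w : List Bool) : Prop :=
  ∃ c u d : List Bool, c.length ≤ 1 ∧ d.length ≤ 1 ∧ w = c ++ theta u ++ d

/-- A binary word is right aligned if it is `c ++ θ(u)` with `c` empty or a single letter. -/
def RightAligned (w : List Bool) : Prop :=
  ∃ c u : List Bool, c.length ≤ 1 ∧ w = c ++ theta u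

/-- The four markers aabaa, ababa, babab, bbabb. -/
def markers : List (List Bool) :=
  [[false,false,true,false,false], [false,true,false,true,false],
   [true,false,true,false,true], [true,true,false,true,true]]

/-- The finite word `x` occurs in the infinite word `w` at position `i`. -/
def MatchesAt {α : Type*} (x : List α) (w : ℕ → α) (i : ℕ) : Prop :=
  ∀ k, (h : k < x.length) → x.get ⟨k, h⟩ = w (i + k)

/-- `u` is T-extendable: for some finite `w` and some position `n`,
`u ++ w ++ T[n..∞)` is cube free. -/
def TExtendable (u : List Bool) : Prop :=
  ∃ (w : List Bool) (n : ℕ), CubefreeInf (catInf (u ++ w) fun k => tm (n + k))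

/-- `u` is right extendable: some infinite extension of `u` is cube free. -/
def RightExtendable {α : Type*} (u : List α) : Prop :=
  ∃ x : ℕ → α, CubefreeInf (catInf u x)

/-! ### Auxiliary definitions and lemmas -/

/-- Position `i` is a "bad" (repetition) position of `w`. -/
def Bad (w : List Bool) (i : ℕ) : Prop :=
  ∃ h : i + 1 < w.length, w[i]'(by omega) = w[i+1]'h

/-- `w` alternates at all positions of the parity of `p`. -/
def AltAt (w : List Bool) (p : ℕ) : Prop :=
  ∀ i, i % 2 = p % 2 → (h : i + 1 < w.length) → w[i]'(by omega) ≠ w[i+1]'h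

lemma bool_flip {x y : Bool} (h : x ≠ y) : y = !x := by
  cases x <;> cases y <;> simp_all

lemma theta_cons (c : Bool) (v : List Bool) : theta (c :: v) = c :: (!c) :: theta v := rfl

lemma theta_length (v : List Bool) : (theta v).length = 2 * v.length := by
  induction v with
  | nil => rfl
  | cons c v ih => rw [theta_cons]; simp [ih]; ring

lemma theta_alt (v : List Bool) : AltAt (theta v) 0 := by
  induction v with
  | nil => intro i hi h; simp [theta] at h
  | cons c v ih =>
    intro i hi h
    match i, hi, h with
    | 0, _, h => cases c <;> simp [theta_cons]
    | 1, hk, _ => exact absurd hk (by decide)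
    | (k+2), hk, h =>
      simp only [theta_cons, List.getElem_cons_succ]
      exact ih k (by omega) (by rw [theta_cons] at h; simp at h; omega)

lemma exists_theta (m : ℕ) : ∀ z : List Bool, z.length = 2 * m → AltAt z 0 → ∃ v, theta v = z := by
  induction m with
  | zero =>
    intro z hz _
    refine ⟨[], ?_⟩
    have : z = [] := List.length_eq_zero_iff.mp (by omega)
    simp [theta, this]
  | succ m ih =>
    intro z hz halt
    match z, hz with
    | [], hz => exact absurd hz (by simp only [List.length_nil]; omega)
    | [a], hz => exact absurd hz (by simp only [List.length_singleton]; omega)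
    | a :: b :: z', hz =>
      have hab : a ≠ b := by
        have := halt 0 rfl (by simp only [List.length_cons]; omega)
        simpa using this
      have hb : b = !a := by cases a <;> cases b <;> simp_all
      have halt' : AltAt z' 0 := by
        intro i hi h
        have := halt (i+2) (by omega) (by simp at h ⊢; omega)
        simpa using this
      obtain ⟨v, hv⟩ := ih z' (by simp at hz; omega) halt'
      exact ⟨a :: v, by rw [theta_cons, hv, hb]⟩

lemma uniform_iff_alt (w : List Bool) : Uniform w ↔ AltAt w 0 ∨ AltAt w 1 := by
  constructor
  · rintro ⟨c, v, d, hc, hd, rfl⟩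
    have key : AltAt (c ++ theta v ++ d) c.length := by
      intro i hi h
      have h' : i + 1 < c.length + 2 * v.length + d.length := by
        simp [theta_length] at h; omega
      have hci : c.length ≤ i := by omega
      have ht : i - c.length + 1 < (theta v).length := by
        rw [theta_length]; omega
      rw [List.getElem_append_left (as := c ++ theta v) (bs := d)
            (by simp [theta_length]; omega),
          List.getElem_append_left (as := c ++ theta v) (bs := d)
            (by simp [theta_length]; omega),
          List.getElem_append_right hci, List.getElem_append_right (by omega)]
      simp only [show i + 1 - c.length = (i - c.length) + 1 from by omega]
      exact theta_alt v (i - c.length) (by omega) ht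
    have : c.length = 0 ∨ c.length = 1 := by omega
    rcases this with h0 | h1
    · left; rw [h0] at key; exact key
    · right; rw [h1] at key; exact key
  · intro hp
    obtain ⟨p, hp1, halt⟩ : ∃ p, p ≤ 1 ∧ AltAt w p := by
      rcases hp with h | h
      exacts [⟨0, by omega, h⟩, ⟨1, by omega, h⟩]
    set n := 2 * ((w.length - p) / 2) with hn
    have hlen : ((w.drop p).take n).length = n := by
      simp [List.length_take, List.length_drop]
      omega
    have hz : AltAt ((w.drop p).take n) 0 := by
      intro i hi h
      rw [hlen] at h
      rw [List.getElem_take, List.getElem_take, List.getElem_drop, List.getElem_drop]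
      simp only [show p + (i+1) = (p + i) + 1 from by omega]
      exact halt (p+i) (by omega) (by omega)
    obtain ⟨v, hv⟩ := exists_theta ((w.length - p) / 2) _ (by rw [hlen]) hz
    refine ⟨w.take p, v, (w.drop p).drop n, ?_, ?_, ?_⟩
    · simp [List.length_take]; omega
    · simp [List.length_drop]; omega
    · rw [hv, List.append_assoc, List.take_append_drop, List.take_append_drop]

lemma infix_of_matches (L x : List Bool) (i : ℕ) (hle : i + x.length ≤ L.length)
    (hm : ∀ k (hk : k < x.length), x[k] = L[i+k]'(by omega)) : x <:+: L := by
  have hx : x = (L.drop i).take x.length := by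
    apply List.ext_getElem
    · simp [List.length_take, List.length_drop]; omega
    · intro k h1 h2
      rw [List.getElem_take, List.getElem_drop]
      exact hm k h1
  rw [hx]
  exact ((List.take_prefix _ _).isInfix).trans ((List.drop_suffix _ _).isInfix)

lemma getElem_of_infix (u x s t : List Bool) (h : s ++ x ++ t = u)
    (k : ℕ) (hk : k < x.length) :
    ∃ hlt : s.length + k < u.length, u[s.length + k]'hlt = x[k] := by
  subst h
  refine ⟨by simp; omega, ?_⟩
  rw [List.getElem_append_left (as := s ++ x) (bs := t) (by simp; omega),
      List.getElem_append_right (by omega : s.length ≤ s.length + k)]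
  simp only [Nat.add_sub_cancel_left]

lemma not_alt_of_bads (w : List Bool) (p i j : ℕ) (hij : i < j) (hpar : (j - i) % 2 = 1)
    (hbi : Bad w i) (hbj : Bad w j) : ¬ AltAt w p := by
  intro halt
  obtain ⟨hi1, hieq⟩ := hbi
  obtain ⟨hj1, hjeq⟩ := hbj
  by_cases h : i % 2 = p % 2
  · exact halt i h hi1 hieq
  · exact halt j (by omega) hj1 hjeq

/-- From an occurrence of a marker get two bad positions of opposite parity. -/
lemma not_uniform_of_marker (u x : List Bool) (hx : x <:+: u)
    (o : ℕ) (ho : o + 1 < x.length) (hodd : o % 2 = 1)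
    (h0 : x[0]'(by omega) = x[1]'(by omega))
    (h1 : x[o]'(by omega) = x[o+1]'ho) : ¬ Uniform u := by
  obtain ⟨s, t, hst⟩ := hx
  have g0 := getElem_of_infix u x s t hst 0 (by omega)
  have g1 := getElem_of_infix u x s t hst 1 (by omega)
  have g2 := getElem_of_infix u x s t hst o (by omega)
  have g3 := getElem_of_infix u x s t hst (o+1) (by omega)
  obtain ⟨b0, e0⟩ := g0
  obtain ⟨b1, e1⟩ := g1
  obtain ⟨b2, e2⟩ := g2
  obtain ⟨b3, e3⟩ := g3
  simp only [Nat.add_zero] at b0 e0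
  have hb0 : Bad u s.length := by
    refine ⟨b1, ?_⟩
    rw [e0, e1, h0]
  have hb1 : Bad u (s.length + o) := by
    refine ⟨by omega, ?_⟩
    simp only [Nat.add_assoc]
    rw [e2, e3, h1]
  intro hu
  rcases (uniform_iff_alt u).mp hu with h | h
  · exact not_alt_of_bads u 0 s.length (s.length + o) (by omega) (by omega) hb0 hb1 h
  · exact not_alt_of_bads u 1 s.length (s.length + o) (by omega) (by omega) hb0 hb1 h

theorem nonuniform_iff_forbidden_factor (u : List Bool) (hcf : Cubefree u) :
    ¬ Uniform u ↔
      ([false,false,true,false,false] <:+: u ∨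
       [false,false,true,false,true,false,false] <:+: u ∨
       [true,true,false,true,true] <:+: u ∨
       [true,true,false,true,false,true,true] <:+: u) := by
  constructor
  · intro hnu
    classical
    have halt : ¬ AltAt u 0 ∧ ¬ AltAt u 1 := by
      constructor <;> intro h <;> exact hnu ((uniform_iff_alt u).mpr (by tauto))
    obtain ⟨h0, h1⟩ := halt
    simp only [AltAt] at h0 h1
    push_neg at h0 h1
    obtain ⟨i0, hi0p, hi0b, hi0e⟩ := h0
    obtain ⟨j0, hj0p, hj0b, hj0e⟩ := h1
    -- the predicate: two bad positions at odd distance d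
    have hP : ∃ d, d % 2 = 1 ∧ ∃ i, Bad u i ∧ Bad u (i + d) := by
      rcases Nat.lt_or_ge i0 j0 with hlt | hge
      · exact ⟨j0 - i0, by omega, i0, ⟨hi0b, hi0e⟩, by
          rw [show i0 + (j0 - i0) = j0 from by omega]; exact ⟨hj0b, hj0e⟩⟩
      · have hne : j0 < i0 := by omega
        exact ⟨i0 - j0, by omega, j0, ⟨hj0b, hj0e⟩, by
          rw [show j0 + (i0 - j0) = i0 from by omega]; exact ⟨hi0b, hi0e⟩⟩
    have hPex : ∃ d, d % 2 = 1 ∧ ∃ i, Bad u i ∧ Bad u (i + d) := hP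
    obtain ⟨hodd, i, hbi, hbj⟩ := Nat.find_spec hPex
    set d := Nat.find hPex with hd
    have hmin : ∀ d' < d, ¬ (d' % 2 = 1 ∧ ∃ i, Bad u i ∧ Bad u (i + d')) :=
      fun d' hd' => Nat.find_min hPex hd'
    obtain ⟨hblen, hbeq⟩ := hbi
    obtain ⟨hlen, heq⟩ := hbj
    -- no bad positions strictly between i and i + d
    have hmid : ∀ k (hk1 : i < k) (hk2 : k < i + d) (h : k + 1 < u.length),
        u[k]'(by omega) ≠ u[k+1]'h := by
      intro k hk1 hk2 _ hkeq
      by_cases hpar : (k - i) % 2 = 1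
      · exact hmin (k - i) (by omega) ⟨hpar, i, ⟨hblen, hbeq⟩, by
          rw [show i + (k - i) = k from by omega]; exact ⟨by omega, hkeq⟩⟩
      · exact hmin (i + d - k) (by omega) ⟨by omega, k, ⟨by omega, hkeq⟩, by
          rw [show k + (i + d - k) = i + d from by omega]; exact ⟨hlen, heq⟩⟩
    obtain ⟨a, ha⟩ : ∃ a : Bool, a = u[i]'(by omega) := ⟨_, rfl⟩
    have hd1 : d ≠ 1 := by
      intro h1
      apply hcf [a] (by simp)
      apply infix_of_matches u _ i (by simp; omega)
      intro k hk
      have e1 : u[i+1]'(by omega) = a := by rw [← hbeq, ← ha]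
      have e2 : u[i+2]'(by omega) = a := by
        have h2 := heq
        simp only [h1, show i + 1 + 1 = i + 2 from by omega] at h2
        rw [← h2]; exact e1
      have hk3 : k < 3 := by simpa using hk
      interval_cases k
      · simpa using ha
      · simpa using e1.symm
      · simpa using e2.symm
    have e1 : u[i+1]'(by omega) = a := by rw [← hbeq, ← ha]
    have hd3 : 3 ≤ d := by omega
    have e2 : u[i+2]'(by omega) = !a := by
      have h2 := hmid (i+1) (by omega) (by omega) (by omega)
      rw [e1] at h2
      exact bool_flip h2
    rcases Nat.lt_or_ge d 4 with hc3 | hge4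
    · -- d = 3 : factor a a !a a a
      have hdd : d = 3 := by omega
      have e3 : u[i+3]'(by omega) = a := by
        have h3 := hmid (i+2) (by omega) (by omega) (by omega)
        rw [e2] at h3
        rw [bool_flip h3, Bool.not_not]
      have e4 : u[i+4]'(by omega) = a := by
        have h4 := heq
        simp only [hdd, show i + 3 + 1 = i + 4 from by omega] at h4
        rw [← h4]; exact e3
      have hfac : [a, a, !a, a, a] <:+: u := by
        apply infix_of_matches u _ i (by simp; omega)
        intro k hk
        have hk5 : k < 5 := by simpa using hk
        interval_cases k
        · simpa using ha
        · simpa using e1.symm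
        · simpa using e2.symm
        · simpa using e3.symm
        · simpa using e4.symm
      cases a
      · left; simpa using hfac
      · right; right; left; simpa using hfac
    rcases Nat.lt_or_ge d 6 with hc5 | hge6
    · -- d = 5 : factor a a !a a !a a a
      have hdd : d = 5 := by omega
      have e3 : u[i+3]'(by omega) = a := by
        have h3 := hmid (i+2) (by omega) (by omega) (by omega)
        rw [e2] at h3
        rw [bool_flip h3, Bool.not_not]
      have e4 : u[i+4]'(by omega) = !a := by
        have h4 := hmid (i+3) (by omega) (by omega) (by omega)
        rw [e3] at h4
        exact bool_flip h4
      have e5 : u[i+5]'(by omega) = a := by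
        have h5 := hmid (i+4) (by omega) (by omega) (by omega)
        rw [e4] at h5
        rw [bool_flip h5, Bool.not_not]
      have e6 : u[i+6]'(by omega) = a := by
        have h6 := heq
        simp only [hdd, show i + 5 + 1 = i + 6 from by omega] at h6
        rw [← h6]; exact e5
      have hfac : [a, a, !a, a, !a, a, a] <:+: u := by
        apply infix_of_matches u _ i (by simp; omega)
        intro k hk
        have hk7 : k < 7 := by simpa using hk
        interval_cases k
        · simpa using ha
        · simpa using e1.symm
        · simpa using e2.symm
        · simpa using e3.symm
        · simpa using e4.symm
        · simpa using e5.symm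
        · simpa using e6.symm
      cases a
      · right; left; simpa using hfac
      · right; right; right; simpa using hfac
    · -- d ≥ 7 : cube (a !a)^3 at position i+1
      exfalso
      have hd7 : 7 ≤ d := by omega
      have e3 : u[i+3]'(by omega) = a := by
        have h3 := hmid (i+2) (by omega) (by omega) (by omega)
        rw [e2] at h3
        rw [bool_flip h3, Bool.not_not]
      have e4 : u[i+4]'(by omega) = !a := by
        have h4 := hmid (i+3) (by omega) (by omega) (by omega)
        rw [e3] at h4
        exact bool_flip h4
      have e5 : u[i+5]'(by omega) = a := by
        have h5 := hmid (i+4) (by omega) (by omega) (by omega)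
        rw [e4] at h5
        rw [bool_flip h5, Bool.not_not]
      have e6 : u[i+6]'(by omega) = !a := by
        have h6 := hmid (i+5) (by omega) (by omega) (by omega)
        rw [e5] at h6
        exact bool_flip h6
      apply hcf [a, !a] (by simp)
      have : ([a, !a] ++ [a, !a] ++ [a, !a] : List Bool) = [a, !a, a, !a, a, !a] := by simp
      rw [this]
      apply infix_of_matches u _ (i+1) (by simp; omega)
      intro k hk
      have hk6 : k < 6 := by simpa using hk
      interval_cases k
      · simpa using e1.symm
      · simpa [show i + 1 + 1 = i + 2 from by omega] using e2.symm
      · simpa [show i + 1 + 2 = i + 3 from by omega] using e3.symm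
      · simpa [show i + 1 + 3 = i + 4 from by omega] using e4.symm
      · simpa [show i + 1 + 4 = i + 5 from by omega] using e5.symm
      · simpa [show i + 1 + 5 = i + 6 from by omega] using e6.symm
  · rintro (h | h | h | h)
    · exact not_uniform_of_marker u _ h 3 (by simp) (by decide) (by decide) (by decide)
    · exact not_uniform_of_marker u _ h 5 (by simp) (by decide) (by decide) (by decide)
    · exact not_uniform_of_marker u _ h 3 (by simp) (by decide) (by decide) (by decide)
    · exact not_uniform_of_marker u _ h 5 (by simp) (by decide) (by decide) (by decide)
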